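/- arXiv:1412.7388 — 2 statements merged into one kernel-verified Lean document; each statement's English description precedes it below -/
import Mathlib

section
/- For an integer k, let I_k(2) = Σ_{m=0}^{∞} 1/(m! · (m+|k|)!). Let P_n be the path graph with vertices 1, …, n and adjacency matrix A_n, and for vertices p, q let cos θ_{pq}(P_n) = (e^{A_n})_{pq} / √((e^{A_n})_{pp} (e^{A_n})_{qq}). Then for every fixed pair of positive integers p, q with p ≠ q, lim_{n→∞} cos θ_{pq}(P_n) = (I_{p−q}(2) − I_{p+q}(2)) / √( (I_0(2) − I_{2p}(2)) · (I_0(2) − I_{2q}(2)) ). -/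
open Matrix Filter Topology

/-- The modified Bessel function of the first kind evaluated at `2`:
`I_k(2) = Σ_{m=0}^{∞} 1/(m! (m+|k|)!)`. -/
noncomputable def besselI2 (k : ℤ) : ℝ :=
  ∑' m : ℕ, 1 / ((Nat.factorial m : ℝ) * (Nat.factorial (m + k.natAbs) : ℝ))

/-- The adjacency matrix of the path graph `P_n`: the vertex `p ∈ {1, …, n}` is represented
by the index `p - 1 : Fin n`, and vertices are adjacent iff they are consecutive. -/
def pathAdj (n : ℕ) : Matrix (Fin n) (Fin n) ℝ :=
  Matrix.of fun p q => if p.1 + 1 = q.1 ∨ q.1 + 1 = p.1 then 1 else 0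

/-- The communicability `G_{pq} = (e^{A_n})_{pq}` of the path graph `P_n` between vertices
`p, q ∈ {1, …, n}` (junk value `0` if `p` or `q` is not a vertex of `P_n`). -/
noncomputable def pathComm (n p q : ℕ) : ℝ :=
  if hp : p - 1 < n then
    if hq : q - 1 < n then NormedSpace.exp (pathAdj n) ⟨p - 1, hp⟩ ⟨q - 1, hq⟩ else 0
  else 0

/-- The cosine of the communicability angle `cos θ_{pq}(P_n) = G_{pq}/√(G_{pp} G_{qq})`
of the path graph `P_n`. -/
noncomputable def pathCos (n p q : ℕ) : ℝ :=
  pathComm n p q / Real.sqrt (pathComm n p p * pathComm n q q)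

/-! ### Auxiliary definitions and lemmas -/

/-- Walk counts on the half-line `ℕ` (walk of length `m` from `a` to `b`). -/
def pathL : ℕ → ℕ → ℕ → ℝ
  | 0, a, b => if a = b then 1 else 0
  | m+1, 0, b => pathL m 1 b
  | m+1, a+1, b => pathL m a b + pathL m (a+2) b

/-- Walk counts on `ℤ`, as a function of `|displacement| = j`. -/
def pathB (m j : ℕ) : ℝ :=
  if (m + j) % 2 = 0 then (m.choose ((m + j) / 2) : ℝ) else 0

lemma pathB_succ (m j : ℕ) : pathB (m+1) (j+1) = pathB m j + pathB m (j+2) := by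
  unfold pathB
  rcases Nat.even_or_odd (m + j) with h | h
  all_goals obtain ⟨s, hs⟩ := h
  · rw [if_pos (by omega), if_pos (by omega), if_pos (by omega),
      show (m + 1 + (j + 1)) / 2 = s + 1 by omega, show (m + j) / 2 = s by omega,
      show (m + (j + 2)) / 2 = s + 1 by omega]
    have hc : (m+1).choose (s+1) = m.choose s + m.choose (s+1) := Nat.choose_succ_succ m s
    rw [hc]; push_cast; ring
  · rw [if_neg (by omega), if_neg (by omega), if_neg (by omega)]; ring

lemma pathB_succ_zero (m : ℕ) : pathB (m+1) 0 = pathB m 1 + pathB m 1 := by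
  unfold pathB
  simp only [Nat.add_zero]
  rcases Nat.even_or_odd (m + 1) with h | h
  all_goals obtain ⟨s, hs⟩ := h
  · have hs1 : 1 ≤ s := by omega
    rw [if_pos (by omega), if_pos (by omega), show (m + 1) / 2 = s by omega]
    have hc : (m+1).choose s = m.choose (s-1) + m.choose s := by
      have h2 := Nat.choose_succ_succ m (s-1)
      rw [Nat.succ_eq_add_one, Nat.succ_eq_add_one, show s - 1 + 1 = s by omega] at h2
      exact h2
    have hsym : m.choose (s-1) = m.choose s := by
      have := Nat.choose_symm (n := m) (k := s) (by omega)
      rw [show m - s = s - 1 by omega] at this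
      exact this
    rw [hc, hsym]; push_cast; ring
  · rw [if_neg (by omega), if_neg (by omega)]; ring

lemma pathB_zero (j : ℕ) : pathB 0 j = if j = 0 then 1 else 0 := by
  unfold pathB
  match j with
  | 0 => norm_num
  | j+1 =>
    rw [if_neg (show ¬ (j+1 = 0) by omega)]
    rcases eq_or_ne ((0 + (j+1)) % 2) 0 with h | h
    · rw [if_pos h, Nat.choose_eq_zero_of_lt (by omega)]; simp
    · rw [if_neg h]

/-- `pathB` on integer displacements. -/
noncomputable def pathBZ (m : ℕ) (d : ℤ) : ℝ := pathB m d.natAbs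

lemma pathBZ_succ (m : ℕ) (d : ℤ) : pathBZ (m+1) d = pathBZ m (d-1) + pathBZ m (d+1) := by
  unfold pathBZ
  rcases lt_trichotomy d 0 with h | h | h
  · obtain ⟨j, rfl⟩ : ∃ j : ℕ, d = -(j+1 : ℕ) := ⟨(d.natAbs - 1), by omega⟩
    rw [show ((-(j+1:ℕ) : ℤ)).natAbs = j + 1 by omega,
      show ((-(j+1:ℕ) : ℤ) - 1).natAbs = j + 2 by omega,
      show ((-(j+1:ℕ) : ℤ) + 1).natAbs = j by omega, pathB_succ m j]
    ring
  · subst h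
    rw [show ((0:ℤ)).natAbs = 0 from rfl, show ((0:ℤ) - 1).natAbs = 1 by omega,
      show ((0:ℤ) + 1).natAbs = 1 by omega, pathB_succ_zero m]
  · obtain ⟨j, rfl⟩ : ∃ j : ℕ, d = (j+1 : ℕ) := ⟨(d.natAbs - 1), by omega⟩
    rw [show (((j+1:ℕ) : ℤ)).natAbs = j + 1 by omega,
      show (((j+1:ℕ) : ℤ) - 1).natAbs = j by omega,
      show (((j+1:ℕ) : ℤ) + 1).natAbs = j + 2 by omega, pathB_succ m j]

/-- Reflection principle: half-line walk counts in terms of full-line ones. -/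
lemma pathL_eq (m : ℕ) : ∀ a b : ℕ,
    pathL m a b = pathBZ m ((b : ℤ) - a) - pathBZ m ((a : ℤ) + b + 2) := by
  induction m with
  | zero =>
    intro a b
    show (if a = b then (1:ℝ) else 0) = _
    unfold pathBZ
    rw [pathB_zero, pathB_zero, if_neg (show ¬ (((a:ℤ) + b + 2).natAbs = 0) by omega)]
    rcases eq_or_ne a b with rfl | hab
    · rw [if_pos rfl, if_pos (by omega)]; norm_num
    · rw [if_neg hab, if_neg (by omega)]; ring
  | succ m ih =>
    intro a b
    match a with
    | 0 =>
      show pathL m 1 b = _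
      rw [ih 1 b, pathBZ_succ m ((b:ℤ) - ((0:ℕ):ℤ)), pathBZ_succ m (((0:ℕ):ℤ) + b + 2),
        show (b:ℤ) - ((0:ℕ):ℤ) - 1 = (b:ℤ) - ((1:ℕ):ℤ) by push_cast; ring,
        show (b:ℤ) - ((0:ℕ):ℤ) + 1 = (b:ℤ) + 1 by push_cast; ring,
        show ((0:ℕ):ℤ) + b + 2 - 1 = (b:ℤ) + 1 by push_cast; ring,
        show ((0:ℕ):ℤ) + b + 2 + 1 = ((1:ℕ):ℤ) + b + 2 by push_cast; ring]
      ring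
    | a+1 =>
      show pathL m a b + pathL m (a+2) b = _
      rw [ih a b, ih (a+2) b, pathBZ_succ m ((b:ℤ) - ((a+1:ℕ):ℤ)),
        pathBZ_succ m (((a+1:ℕ):ℤ) + b + 2),
        show (b:ℤ) - ((a+1:ℕ):ℤ) - 1 = (b:ℤ) - ((a+2:ℕ):ℤ) by push_cast; ring,
        show (b:ℤ) - ((a+1:ℕ):ℤ) + 1 = (b:ℤ) - ((a:ℕ):ℤ) by push_cast; ring,
        show ((a+1:ℕ):ℤ) + b + 2 - 1 = ((a:ℕ):ℤ) + b + 2 by push_cast; ring,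
        show ((a+1:ℕ):ℤ) + b + 2 + 1 = ((a+2:ℕ):ℤ) + b + 2 by push_cast; ring]
      ring

lemma pathAdj_apply {n : ℕ} (i r : Fin n) :
    pathAdj n i r = if i.1 + 1 = r.1 ∨ r.1 + 1 = i.1 then 1 else 0 := rfl

/-- Row splitting of `pathAdj * M`. -/
lemma pathAdj_mul_apply {n : ℕ} (M : Matrix (Fin n) (Fin n) ℝ) (a b : Fin n)
    (ha : a.1 + 1 < n) :
    (pathAdj n * M) a b =
      M ⟨a.1 + 1, ha⟩ b + (if h : a.1 = 0 then 0 else M ⟨a.1 - 1, by omega⟩ b) := by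
  rw [Matrix.mul_apply]
  have key : ∀ r : Fin n, pathAdj n a r * M r b =
      (if r = (⟨a.1 + 1, ha⟩ : Fin n) then M r b else 0)
        + (if h : a.1 = 0 then 0 else if r = (⟨a.1 - 1, by omega⟩ : Fin n) then M r b else 0) := by
    intro r
    rw [pathAdj_apply]
    rcases eq_or_ne a.1 0 with h0 | h0
    · rw [dif_pos h0]
      by_cases h1 : a.1 + 1 = r.1
      · rw [if_pos (Or.inl h1), if_pos (by exact Fin.ext h1.symm)]; ring
      · rw [if_neg (by omega), if_neg (by intro h; apply h1; rw [h])]; ring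
    · rw [dif_neg h0]
      by_cases h1 : a.1 + 1 = r.1
      · have hr2 : ¬ (r = (⟨a.1 - 1, by omega⟩ : Fin n)) := by
          intro h; apply h0; have := congrArg Fin.val h; simp at this; omega
        rw [if_pos (Or.inl h1), if_pos (Fin.ext h1.symm), if_neg hr2]; ring
      · by_cases h2 : r.1 + 1 = a.1
        · have hr1 : ¬ (r = (⟨a.1 + 1, ha⟩ : Fin n)) := by
            intro h; have := congrArg Fin.val h; simp at this; omega
          have hr2 : r = (⟨a.1 - 1, by omega⟩ : Fin n) := by
            apply Fin.ext; simp; omega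
          rw [if_pos (Or.inr h2), if_neg hr1, if_pos hr2]; ring
        · rw [if_neg (by tauto), if_neg (by intro h; have := congrArg Fin.val h; simp at this; omega),
            if_neg (by intro h; have := congrArg Fin.val h; simp at this; omega)]
          ring
  rw [Finset.sum_congr rfl fun r _ => key r, Finset.sum_add_distrib]
  congr 1
  · rw [Finset.sum_ite_eq' Finset.univ]
    simp
  · rcases eq_or_ne a.1 0 with h0 | h0
    · simp [h0]
    · rw [dif_neg h0]
      simp only [dif_neg h0]
      rw [Finset.sum_ite_eq' Finset.univ]
      simp

/-- Stabilization: entries of powers agree with half-line walk counts. -/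
lemma pathAdj_pow_entry {n : ℕ} (m : ℕ) : ∀ (a b : Fin n), a.1 + m < n →
    (pathAdj n ^ m) a b = pathL m a.1 b.1 := by
  induction m with
  | zero =>
    intro a b _
    rw [pow_zero, Matrix.one_apply]
    show _ = (if a.1 = b.1 then (1:ℝ) else 0)
    simp [Fin.ext_iff]
  | succ m ih =>
    intro a b h
    rw [pow_succ', pathAdj_mul_apply _ a b (by omega)]
    rw [ih ⟨a.1 + 1, by omega⟩ b (by simp; omega)]
    simp only [Fin.val_mk]
    rcases eq_or_ne a.1 0 with h0 | h0
    · rw [dif_pos h0, h0]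
      show pathL m (0+1) b.1 + 0 = pathL (m+1) 0 b.1
      norm_num [pathL]
    · rw [dif_neg h0, ih ⟨a.1 - 1, by omega⟩ b (by simp; omega)]
      simp only [Fin.val_mk]
      obtain ⟨c, hc⟩ : ∃ c, a.1 = c + 1 := ⟨a.1 - 1, by omega⟩
      rw [hc]
      show pathL m (c + 1 + 1) b.1 + pathL m (c + 1 - 1) b.1 = pathL (m+1) (c+1) b.1
      rw [show c + 1 + 1 = c + 2 from rfl, show c + 1 - 1 = c from rfl]
      show _ = pathL m c b.1 + pathL m (c+2) b.1
      ring

/-- Entry bounds for powers of the path adjacency matrix. -/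
lemma pathAdj_pow_bound {n : ℕ} (m : ℕ) (a b : Fin n) :
    0 ≤ (pathAdj n ^ m) a b ∧ (pathAdj n ^ m) a b ≤ 2 ^ m := by
  induction m generalizing a b with
  | zero =>
    rw [pow_zero, Matrix.one_apply]
    constructor <;> split <;> norm_num
  | succ m ih =>
    rw [pow_succ', Matrix.mul_apply]
    have hrow : ∀ r : Fin n, (0:ℝ) ≤ pathAdj n a r ∧ pathAdj n a r ≤ 1 := by
      intro r; rw [pathAdj_apply]; constructor <;> split <;> norm_num
    constructor
    · apply Finset.sum_nonneg
      intro r _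
      exact mul_nonneg (hrow r).1 (ih r b).1
    · have hsum : ∑ r, pathAdj n a r ≤ 2 := by
        have : ∀ r : Fin n, pathAdj n a r = if a.1 + 1 = r.1 ∨ r.1 + 1 = a.1 then (1:ℝ) else 0 :=
          fun r => rfl
        simp only [this]
        rw [Finset.sum_boole]
        have hcard : (Finset.univ.filter
            (fun r : Fin n => a.1 + 1 = r.1 ∨ r.1 + 1 = a.1)).card ≤ 2 := by
          have hsub : (Finset.univ.filter
              (fun r : Fin n => a.1 + 1 = r.1 ∨ r.1 + 1 = a.1)).image Fin.val
              ⊆ ({a.1 + 1, a.1 - 1} : Finset ℕ) := by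
            intro x hx
            simp only [Finset.mem_image, Finset.mem_filter] at hx
            obtain ⟨r, ⟨_, hr⟩, rfl⟩ := hx
            simp only [Finset.mem_insert, Finset.mem_singleton]
            omega
          have hinj : ((Finset.univ.filter
              (fun r : Fin n => a.1 + 1 = r.1 ∨ r.1 + 1 = a.1))).card
              = ((Finset.univ.filter
              (fun r : Fin n => a.1 + 1 = r.1 ∨ r.1 + 1 = a.1)).image Fin.val).card := by
            rw [Finset.card_image_of_injective _ Fin.val_injective]
          rw [hinj]
          calc _ ≤ ({a.1 + 1, a.1 - 1} : Finset ℕ).card := Finset.card_le_card hsub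
          _ ≤ 2 := by
            apply le_trans (Finset.card_insert_le _ _); simp
        exact_mod_cast hcard
      calc ∑ r, pathAdj n a r * (pathAdj n ^ m) r b
          ≤ ∑ r, pathAdj n a r * 2 ^ m := by
            apply Finset.sum_le_sum
            intro r _
            exact mul_le_mul_of_nonneg_left (ih r b).2 (hrow r).1
        _ = (∑ r, pathAdj n a r) * 2 ^ m := by rw [Finset.sum_mul]
        _ ≤ 2 * 2 ^ m := by
            apply mul_le_mul_of_nonneg_right hsum (by positivity)
        _ = 2 ^ (m+1) := by ring

/-- The exponential of a matrix, entrywise, as a sum of the exponential series. -/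
lemma hasSum_exp_entry {n : ℕ} (A : Matrix (Fin n) (Fin n) ℝ) (i j : Fin n) :
    HasSum (fun m : ℕ => (m.factorial : ℝ)⁻¹ * (A ^ m) i j) (NormedSpace.exp A i j) := by
  letI : SeminormedRing (Matrix (Fin n) (Fin n) ℝ) := Matrix.linftyOpSemiNormedRing
  letI : NormedRing (Matrix (Fin n) (Fin n) ℝ) := Matrix.linftyOpNormedRing
  letI : NormedAlgebra ℝ (Matrix (Fin n) (Fin n) ℝ) := Matrix.linftyOpNormedAlgebra
  have h := NormedSpace.exp_series_hasSum_exp' (𝕂 := ℝ) A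
  have h2 := (Pi.hasSum.mp (Pi.hasSum.mp h i)) j
  simp [Matrix.smul_apply, smul_eq_mul] at h2
  exact h2

/-- The Bessel-type series as a function of a natural number index. -/
noncomputable def besselS (j : ℕ) : ℝ :=
  ∑' m : ℕ, 1 / ((Nat.factorial m : ℝ) * (Nat.factorial (m + j) : ℝ))

lemma besselI2_eq (k : ℤ) : besselI2 k = besselS k.natAbs := rfl

lemma pathB_nonneg (m j : ℕ) : 0 ≤ pathB m j := by
  unfold pathB; split <;> positivity

lemma pathB_le (m j : ℕ) : pathB m j ≤ 2 ^ m := by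
  unfold pathB
  split
  · have h : m.choose ((m+j)/2) ≤ 2 ^ m := by
      rcases le_or_gt ((m+j)/2) m with hk | hk
      · calc m.choose ((m+j)/2) ≤ ∑ i ∈ Finset.range (m+1), m.choose i :=
            Finset.single_le_sum (f := fun i => m.choose i) (fun i _ => Nat.zero_le _)
              (Finset.mem_range.mpr (by omega))
          _ = 2 ^ m := Nat.sum_range_choose m
      · rw [Nat.choose_eq_zero_of_lt hk]; exact Nat.zero_le _
    calc (m.choose ((m+j)/2) : ℝ) ≤ ((2 ^ m : ℕ) : ℝ) := by exact_mod_cast h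
      _ = 2 ^ m := by push_cast; ring
  · positivity

lemma summable_pathB_div (j : ℕ) : Summable (fun m : ℕ => pathB m j / m.factorial) := by
  refine Summable.of_nonneg_of_le
    (fun m => div_nonneg (pathB_nonneg m j) (by positivity))
    (fun m => ?_) (Real.summable_pow_div_factorial 2)
  have hpos : (0:ℝ) < m.factorial := by exact_mod_cast m.factorial_pos
  exact div_le_div_of_nonneg_right (pathB_le m j) hpos.le |>.trans (le_refl _)

lemma summable_bessel_terms (j : ℕ) :
    Summable (fun m : ℕ => 1 / ((m.factorial : ℝ) * ((m + j).factorial : ℝ))) := by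
  refine Summable.of_nonneg_of_le (fun m => by positivity)
    (fun m => ?_) (Real.summable_pow_div_factorial 1)
  rw [one_pow]
  rw [div_le_div_iff₀ (by positivity) (by positivity)]
  have h1 : (1:ℝ) ≤ ((m + j).factorial : ℝ) := by
    exact_mod_cast Nat.one_le_iff_ne_zero.mpr (m+j).factorial_ne_zero
  nlinarith [(Nat.cast_pos (α := ℝ)).mpr (Nat.factorial_pos m)]

/-- Reindexing: the tsum of `pathB · j / ·!` equals the Bessel series. -/
lemma tsum_pathB_div (j : ℕ) :
    (∑' m : ℕ, pathB m j / m.factorial) = besselS j := by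
  have hinj : Function.Injective (fun t : ℕ => 2 * t + j) := by
    intro x y h; simp only at h; omega
  have hsupp : Function.support (fun m : ℕ => pathB m j / m.factorial)
      ⊆ Set.range (fun t : ℕ => 2 * t + j) := by
    intro m hm
    simp only [Function.mem_support] at hm
    by_contra hr
    simp only [Set.mem_range, not_exists] at hr
    apply hm
    unfold pathB
    rcases eq_or_ne ((m + j) % 2) 0 with h | h
    · rw [if_pos h]
      have hmj : m < j := by
        by_contra hmj
        exact hr ((m - j) / 2) (by omega)
      rw [Nat.choose_eq_zero_of_lt (by omega)]
      simp
    · rw [if_neg h]; simp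
  have hre := Function.Injective.tsum_eq hinj hsupp
  rw [← hre]
  unfold besselS
  congr 1
  funext t
  show pathB (2 * t + j) j / ((2*t+j).factorial : ℝ) = _
  unfold pathB
  rw [if_pos (by omega), show (2 * t + j + j) / 2 = t + j by omega]
  have key : ((2*t+j).choose (t+j)) * t.factorial * (t+j).factorial = (2*t+j).factorial := by
    have h0 := Nat.add_choose_mul_factorial_mul_factorial t (t + j)
    rw [show t + (t + j) = 2 * t + j by omega] at h0
    exact h0
  have h1 : (0:ℝ) < t.factorial := by exact_mod_cast t.factorial_pos
  have h2 : (0:ℝ) < (t+j).factorial := by exact_mod_cast (t+j).factorial_pos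
  have h3 : (0:ℝ) < (2*t+j).factorial := by exact_mod_cast (2*t+j).factorial_pos
  have keyR : ((2*t+j).choose (t+j) : ℝ) * t.factorial * (t+j).factorial
      = ((2*t+j).factorial : ℝ) := by exact_mod_cast key
  field_simp
  nlinarith [keyR]

lemma besselS_diff_pos {j : ℕ} (hj : 2 ≤ j) : 0 < besselS 0 - besselS j := by
  unfold besselS
  rw [← Summable.tsum_sub (summable_bessel_terms 0) (summable_bessel_terms j)]
  refine Summable.tsum_pos ((summable_bessel_terms 0).sub (summable_bessel_terms j)) (fun m => ?_) 0 ?_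
  · apply sub_nonneg.mpr
    apply one_div_le_one_div_of_le (by positivity)
    have : (m+0).factorial ≤ (m + j).factorial := Nat.factorial_le (by omega)
    have h := (Nat.cast_le (α := ℝ)).mpr this
    have h1 : (0:ℝ) < m.factorial := by exact_mod_cast m.factorial_pos
    nlinarith
  · have h2 : (2:ℝ) ≤ (j.factorial : ℝ) := by
      have : 2 ≤ j.factorial := by
        calc 2 = Nat.factorial 2 := rfl
        _ ≤ j.factorial := Nat.factorial_le (by omega)
      exact_mod_cast this
    simp only [Nat.factorial_zero, Nat.cast_one, one_mul, Nat.zero_add, Nat.add_zero]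
    have hf : (0:ℝ) < j.factorial := by exact_mod_cast j.factorial_pos
    rw [sub_pos, div_lt_div_iff₀ hf one_pos]
    linarith

/-- The `m`-th term of the communicability series (with the same junk-value structure
as `pathComm`). -/
noncomputable def pathTerm (n p q m : ℕ) : ℝ :=
  if hp : p - 1 < n then
    if hq : q - 1 < n then
      (m.factorial : ℝ)⁻¹ * (pathAdj n ^ m) ⟨p - 1, hp⟩ ⟨q - 1, hq⟩ else 0
  else 0

lemma pathComm_eq_tsum (n p q : ℕ) : pathComm n p q = ∑' m, pathTerm n p q m := by
  unfold pathComm pathTerm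
  by_cases hp : p - 1 < n
  · by_cases hq : q - 1 < n
    · rw [dif_pos hp, dif_pos hq]
      simp only [dif_pos hp, dif_pos hq]
      exact ((hasSum_exp_entry (pathAdj n) ⟨p-1,hp⟩ ⟨q-1,hq⟩).tsum_eq).symm
    · rw [dif_pos hp, dif_neg hq]
      simp only [dif_pos hp, dif_neg hq]
      exact tsum_zero.symm
  · rw [dif_neg hp]
    simp only [dif_neg hp]
    exact tsum_zero.symm

lemma pathTerm_bound (n p q m : ℕ) : ‖pathTerm n p q m‖ ≤ 2 ^ m / m.factorial := by
  have hfac : (0:ℝ) < m.factorial := by exact_mod_cast m.factorial_pos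
  unfold pathTerm
  split_ifs with h1 h2
  · rw [Real.norm_eq_abs, abs_mul, abs_of_nonneg (by positivity)]
    have hb := pathAdj_pow_bound m (⟨p-1,h1⟩ : Fin n) ⟨q-1,h2⟩
    rw [abs_of_nonneg hb.1, div_eq_inv_mul]
    exact mul_le_mul_of_nonneg_left hb.2 (by positivity)
  · simp; positivity
  · simp; positivity

lemma pathTerm_eventually (p q m : ℕ) (hp : 0 < p) (hq : 0 < q) :
    ∀ n, p + q + m ≤ n →
      pathTerm n p q m = (m.factorial : ℝ)⁻¹ * pathL m (p-1) (q-1) := by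
  intro n hn
  have hpn : p - 1 < n := by omega
  have hqn : q - 1 < n := by omega
  unfold pathTerm
  rw [dif_pos hpn, dif_pos hqn,
    pathAdj_pow_entry m ⟨p-1,hpn⟩ ⟨q-1,hqn⟩ (by simp; omega)]

/-- Key limit: the communicability converges to the Bessel expression. -/
lemma pathComm_tendsto (p q : ℕ) (hp : 0 < p) (hq : 0 < q) :
    Tendsto (fun n => pathComm n p q) atTop
      (𝓝 (besselS (((q-1:ℕ):ℤ) - ((p-1:ℕ):ℤ)).natAbs
        - besselS (((p-1:ℕ):ℤ) + ((q-1:ℕ):ℤ) + 2).natAbs)) := by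
  have hab : ∀ m : ℕ, Tendsto (fun n => pathTerm n p q m) atTop
      (𝓝 ((m.factorial : ℝ)⁻¹ * pathL m (p-1) (q-1))) := by
    intro m
    apply Tendsto.congr' _ tendsto_const_nhds
    filter_upwards [eventually_ge_atTop (p + q + m)] with n hn
    exact (pathTerm_eventually p q m hp hq n hn).symm
  have hbound : ∀ᶠ n in atTop, ∀ m : ℕ, ‖pathTerm n p q m‖ ≤ 2 ^ m / m.factorial :=
    Filter.Eventually.of_forall (fun n m => pathTerm_bound n p q m)
  have hlim : Tendsto (fun n => ∑' m, pathTerm n p q m) atTop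
      (𝓝 (∑' m, (m.factorial : ℝ)⁻¹ * pathL m (p-1) (q-1))) :=
    tendsto_tsum_of_dominated_convergence (Real.summable_pow_div_factorial 2) hab hbound
  have heq : (∑' m, (m.factorial : ℝ)⁻¹ * pathL m (p-1) (q-1))
      = besselS (((q-1:ℕ):ℤ) - ((p-1:ℕ):ℤ)).natAbs
        - besselS (((p-1:ℕ):ℤ) + ((q-1:ℕ):ℤ) + 2).natAbs := by
    have hterm : ∀ m : ℕ, (m.factorial : ℝ)⁻¹ * pathL m (p-1) (q-1)
        = pathB m (((q-1:ℕ):ℤ) - ((p-1:ℕ):ℤ)).natAbs / m.factorial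
          - pathB m (((p-1:ℕ):ℤ) + ((q-1:ℕ):ℤ) + 2).natAbs / m.factorial := by
      intro m
      rw [pathL_eq m (p-1) (q-1)]
      unfold pathBZ
      ring
    rw [tsum_congr hterm,
      Summable.tsum_sub (summable_pathB_div _) (summable_pathB_div _),
      tsum_pathB_div, tsum_pathB_div]
  rw [← heq]
  exact hlim.congr (fun n => (pathComm_eq_tsum n p q).symm)

/-- For fixed distinct vertices `p, q ≥ 1`, the cosine of the
communicability angle of the path graph `P_n` converges as `n → ∞` to
`(I_{p−q}(2) − I_{p+q}(2)) / √((I_0(2) − I_{2p}(2))(I_0(2) − I_{2q}(2)))`. -/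
theorem path_graph_cos_angle_limit (p q : ℕ) (hp : 0 < p) (hq : 0 < q) (hpq : p ≠ q) :
    Tendsto (fun n => pathCos n p q) atTop
      (𝓝 ((besselI2 ((p : ℤ) - (q : ℤ)) - besselI2 ((p : ℤ) + (q : ℤ)))
        / Real.sqrt ((besselI2 0 - besselI2 (2 * (p : ℤ)))
            * (besselI2 0 - besselI2 (2 * (q : ℤ)))))) := by
  have e0 : (0:ℤ).natAbs = 0 := rfl
  have hnum : Tendsto (fun n => pathComm n p q) atTop
      (𝓝 (besselI2 ((p : ℤ) - (q : ℤ)) - besselI2 ((p : ℤ) + (q : ℤ)))) := by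
    have h := pathComm_tendsto p q hp hq
    have e1 : besselS (((q-1:ℕ):ℤ) - ((p-1:ℕ):ℤ)).natAbs = besselI2 ((p : ℤ) - (q : ℤ)) := by
      rw [besselI2_eq]; congr 1; omega
    have e2 : besselS (((p-1:ℕ):ℤ) + ((q-1:ℕ):ℤ) + 2).natAbs
        = besselI2 ((p : ℤ) + (q : ℤ)) := by
      rw [besselI2_eq]; congr 1; omega
    rwa [e1, e2] at h
  have hdiag : ∀ r : ℕ, 0 < r → Tendsto (fun n => pathComm n r r) atTop
      (𝓝 (besselI2 0 - besselI2 (2 * (r : ℤ)))) := by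
    intro r hr
    have h := pathComm_tendsto r r hr hr
    have e1 : besselS (((r-1:ℕ):ℤ) - ((r-1:ℕ):ℤ)).natAbs = besselI2 0 := by
      rw [besselI2_eq]; congr 1; omega
    have e2 : besselS (((r-1:ℕ):ℤ) + ((r-1:ℕ):ℤ) + 2).natAbs
        = besselI2 (2 * (r : ℤ)) := by
      rw [besselI2_eq]; congr 1; omega
    rwa [e1, e2] at h
  have hDp : 0 < besselI2 0 - besselI2 (2 * (p : ℤ)) := by
    rw [besselI2_eq 0, besselI2_eq (2 * (p : ℤ))]
    exact besselS_diff_pos (by omega)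
  have hDq : 0 < besselI2 0 - besselI2 (2 * (q : ℤ)) := by
    rw [besselI2_eq 0, besselI2_eq (2 * (q : ℤ))]
    exact besselS_diff_pos (by omega)
  have hmulpos : 0 < (besselI2 0 - besselI2 (2 * (p : ℤ)))
      * (besselI2 0 - besselI2 (2 * (q : ℤ))) := mul_pos hDp hDq
  have hden : Tendsto (fun n => Real.sqrt (pathComm n p p * pathComm n q q)) atTop
      (𝓝 (Real.sqrt ((besselI2 0 - besselI2 (2 * (p : ℤ)))
        * (besselI2 0 - besselI2 (2 * (q : ℤ)))))) :=
    (Real.continuous_sqrt.tendsto _).comp ((hdiag p hp).mul (hdiag q hq))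
  have hne : Real.sqrt ((besselI2 0 - besselI2 (2 * (p : ℤ)))
      * (besselI2 0 - besselI2 (2 * (q : ℤ)))) ≠ 0 :=
    ne_of_gt (Real.sqrt_pos.mpr hmulpos)
  exact hnum.div hden hne
end

section
/- Let P_n be the path graph with vertices 1, …, n and adjacency matrix A_n, and for an integer k let I_k(2) = Σ_{m=0}^{∞} 1/(m! · (m+|k|)!). Then the cosine of the communicability angle between the two end vertices of the path tends to zero as the path grows: lim_{n→∞} cos θ_{1n}(P_n) = lim_{n→∞} (I_{n−1}(2) − I_{n+1}(2)) / (I_0(2) − I_2(2)) = 0, where cos θ_{1n}(P_n) = (e^{A_n})_{1n}/√((e^{A_n})_{11}(e^{A_n})_{nn}). Hence the communicability angle attains its upper bound 90° in the limit. -/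
open Matrix Filter Topology

lemma pathAdj_nonneg (n : ℕ) (p q : Fin n) : 0 ≤ pathAdj n p q := by
  simp only [pathAdj, Matrix.of_apply]; split_ifs <;> norm_num

lemma pathAdj_pow_nonneg (n k : ℕ) (p q : Fin n) : 0 ≤ (pathAdj n ^ k) p q := by
  induction k generalizing p q with
  | zero => simp [Matrix.one_apply]; split_ifs <;> norm_num
  | succ k ih =>
    rw [pow_succ, Matrix.mul_apply]
    exact Finset.sum_nonneg fun r _ => mul_nonneg (ih p r) (pathAdj_nonneg n r q)

lemma indicator_sum_le_one (n : ℕ) (P : Fin n → Prop) [DecidablePred P]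
    (h : ∀ a b, P a → P b → a = b) : ∑ r : Fin n, (if P r then (1:ℝ) else 0) ≤ 1 := by
  rw [Finset.sum_boole]
  have : (Finset.univ.filter P).card ≤ 1 :=
    Finset.card_le_one.mpr fun a ha b hb =>
      h a b (Finset.mem_filter.mp ha).2 (Finset.mem_filter.mp hb).2
  exact_mod_cast this

lemma pathAdj_colsum (n : ℕ) (q : Fin n) : ∑ r : Fin n, pathAdj n r q ≤ 2 := by
  have h1 : ∀ r : Fin n, pathAdj n r q ≤
      (if r.1 + 1 = q.1 then (1:ℝ) else 0) + (if q.1 + 1 = r.1 then (1:ℝ) else 0) := by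
    intro r
    simp only [pathAdj, Matrix.of_apply]
    split_ifs <;> simp_all <;> norm_num
  calc ∑ r : Fin n, pathAdj n r q
      ≤ ∑ r : Fin n, ((if r.1 + 1 = q.1 then (1:ℝ) else 0) + (if q.1 + 1 = r.1 then (1:ℝ) else 0)) :=
        Finset.sum_le_sum fun r _ => h1 r
    _ = (∑ r : Fin n, if r.1 + 1 = q.1 then (1:ℝ) else 0)
        + ∑ r : Fin n, if q.1 + 1 = r.1 then (1:ℝ) else 0 := Finset.sum_add_distrib
    _ ≤ 1 + 1 := by
        gcongr
        · exact indicator_sum_le_one n _ fun a b ha hb => Fin.ext (by omega)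
        · exact indicator_sum_le_one n _ fun a b ha hb => Fin.ext (by omega)
    _ = 2 := by norm_num

lemma pathAdj_pow_le (n k : ℕ) (p q : Fin n) : (pathAdj n ^ k) p q ≤ 2 ^ k := by
  induction k generalizing p q with
  | zero => simp [Matrix.one_apply]; split_ifs <;> norm_num
  | succ k ih =>
    rw [pow_succ, Matrix.mul_apply]
    calc ∑ r : Fin n, (pathAdj n ^ k) p r * pathAdj n r q
        ≤ ∑ r : Fin n, 2 ^ k * pathAdj n r q :=
          Finset.sum_le_sum fun r _ => mul_le_mul_of_nonneg_right (ih p r) (pathAdj_nonneg n r q)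
      _ = 2 ^ k * ∑ r : Fin n, pathAdj n r q := by rw [Finset.mul_sum]
      _ ≤ 2 ^ k * 2 := by
          have := pathAdj_colsum n q
          gcongr
      _ = 2 ^ (k + 1) := by ring

lemma pathAdj_pow_eq_zero (n k : ℕ) (p q : Fin n) (h : p.1 + k < q.1) :
    (pathAdj n ^ k) p q = 0 := by
  induction k generalizing p with
  | zero => simp only [pow_zero]; exact Matrix.one_apply_ne (by intro e; subst e; omega)
  | succ k ih =>
    rw [pow_succ', Matrix.mul_apply]
    refine Finset.sum_eq_zero fun r _ => ?_
    by_cases hr : pathAdj n p r = 0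
    · rw [hr, zero_mul]
    · have hcond : p.1 + 1 = r.1 ∨ r.1 + 1 = p.1 := by
        by_contra hc
        exact hr (by simp [pathAdj, hc])
      have : r.1 + k < q.1 := by omega
      rw [ih r this, mul_zero]

lemma entry_nonneg (n k : ℕ) (p q : Fin n) :
    0 ≤ ((k.factorial : ℝ))⁻¹ * (pathAdj n ^ k) p q :=
  mul_nonneg (by positivity) (pathAdj_pow_nonneg n k p q)

lemma entry_le (n k : ℕ) (p q : Fin n) :
    ((k.factorial : ℝ))⁻¹ * (pathAdj n ^ k) p q ≤ 2 ^ k / k.factorial := by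
  rw [div_eq_inv_mul]
  exact mul_le_mul_of_nonneg_left (pathAdj_pow_le n k p q) (by positivity)

lemma summable_entry (n : ℕ) (p q : Fin n) :
    Summable fun k : ℕ => ((k.factorial : ℝ))⁻¹ * (pathAdj n ^ k) p q :=
  Summable.of_nonneg_of_le (entry_nonneg n · p q) (entry_le n · p q)
    (Real.summable_pow_div_factorial 2)

lemma exp_entry (n : ℕ) (p q : Fin n) :
    NormedSpace.exp (pathAdj n) p q
      = ∑' k : ℕ, ((k.factorial : ℝ))⁻¹ * (pathAdj n ^ k) p q := by
  have hsum : HasSum (fun k : ℕ => ((k.factorial : ℝ))⁻¹ • pathAdj n ^ k)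
      (Matrix.of fun p q => ∑' k : ℕ, ((k.factorial : ℝ))⁻¹ * (pathAdj n ^ k) p q) := by
    refine Pi.hasSum.mpr ?_
    intro p'
    refine Pi.hasSum.mpr ?_
    intro q'
    simpa [Matrix.smul_apply, smul_eq_mul] using (summable_entry n p' q').hasSum
  rw [NormedSpace.exp_eq_tsum ℝ]
  show (∑' k : ℕ, ((k.factorial : ℝ))⁻¹ • pathAdj n ^ k) p q = _
  rw [hsum.tsum_eq]
  rfl

lemma diag_ge_one (n : ℕ) (p : Fin n) :
    1 ≤ NormedSpace.exp (pathAdj n) p p := by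
  rw [exp_entry]
  have h0 : ((Nat.factorial 0 : ℝ))⁻¹ * (pathAdj n ^ 0) p p = 1 := by
    simp [Matrix.one_apply]
  calc (1:ℝ) = _ := h0.symm
    _ ≤ _ := Summable.le_tsum (summable_entry n p p) 0 fun j _ => entry_nonneg n j p p

lemma exp_entry_nonneg (n : ℕ) (p q : Fin n) : 0 ≤ NormedSpace.exp (pathAdj n) p q := by
  rw [exp_entry]
  exact tsum_nonneg fun k => entry_nonneg n k p q

private theorem part1 : Tendsto (fun n : ℕ => pathCos n 1 n) atTop (𝓝 0) := by
  set C : ℕ → ℝ := fun m => ∑' k : ℕ, (2:ℝ) ^ (k + m) / (k + m).factorial with hC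
  have hCtend : Tendsto (fun n : ℕ => C (n - 1)) atTop (𝓝 0) := by
    have h1 := tendsto_sum_nat_add (fun k : ℕ => (2:ℝ) ^ k / k.factorial)
    exact h1.comp (tendsto_sub_atTop_nat 1)
  apply squeeze_zero (g := fun n => C (n - 1)) ?_ ?_ hCtend
  · intro n
    unfold pathCos pathComm
    apply div_nonneg _ (Real.sqrt_nonneg _)
    split_ifs <;> first | exact exp_entry_nonneg _ _ _ | exact le_refl 0
  · intro n
    rcases Nat.eq_zero_or_pos n with rfl | hn
    · have : pathComm 0 1 0 = 0 := by unfold pathComm; simp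
      unfold pathCos
      rw [this, zero_div]
      exact tsum_nonneg fun k => by positivity
    · have hp : 1 - 1 < n := by omega
      have hq : n - 1 < n := by omega
      have hcomm : pathComm n 1 n = NormedSpace.exp (pathAdj n) ⟨0, by omega⟩ ⟨n-1, hq⟩ := by
        unfold pathComm
        rw [dif_pos hp, dif_pos hq]
      -- G_{1n} ≤ C (n-1)
      have hG : pathComm n 1 n ≤ C (n - 1) := by
        rw [hcomm, exp_entry]
        set g : ℕ → ℝ := fun k => ((k.factorial : ℝ))⁻¹ * (pathAdj n ^ k) ⟨0, by omega⟩ ⟨n-1, hq⟩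
        have hgsum : Summable g := summable_entry n _ _
        have hshift := Summable.sum_add_tsum_nat_add (f := g) (n - 1) hgsum
        have hzero : ∑ i ∈ Finset.range (n-1), g i = 0 := by
          refine Finset.sum_eq_zero fun i hi => ?_
          have hi' : i < n - 1 := Finset.mem_range.mp hi
          have : (pathAdj n ^ i) ⟨0, by omega⟩ ⟨n-1, hq⟩ = 0 :=
            pathAdj_pow_eq_zero n i _ _ (by simpa using hi')
          simp [g, this]
        rw [← hshift, hzero, zero_add]
        refine Summable.tsum_le_tsum (fun i => ?_) (hgsum.comp_injective (add_left_injective (n-1)))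
          ((Real.summable_pow_div_factorial 2).comp_injective (add_left_injective (n-1)))
        exact entry_le n (i + (n-1)) _ _
      have hdiag1 : (1:ℝ) ≤ pathComm n 1 1 := by
        have : pathComm n 1 1 = NormedSpace.exp (pathAdj n) ⟨0, by omega⟩ ⟨0, by omega⟩ := by
          unfold pathComm; rw [dif_pos hp, dif_pos hp]
        rw [this]; exact diag_ge_one n _
      have hdiagn : (1:ℝ) ≤ pathComm n n n := by
        have : pathComm n n n = NormedSpace.exp (pathAdj n) ⟨n-1, hq⟩ ⟨n-1, hq⟩ := by
          unfold pathComm; rw [dif_pos hq, dif_pos hq]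
        rw [this]; exact diag_ge_one n _
      have hsqrt : (1:ℝ) ≤ Real.sqrt (pathComm n 1 1 * pathComm n n n) := by
        rw [show (1:ℝ) = Real.sqrt 1 from (Real.sqrt_one).symm]
        exact Real.sqrt_le_sqrt (by nlinarith)
      have hGnonneg : 0 ≤ pathComm n 1 n := by
        rw [hcomm]; exact exp_entry_nonneg n _ _
      calc pathCos n 1 n ≤ pathComm n 1 n := div_le_self hGnonneg hsqrt
        _ ≤ C (n-1) := hG

lemma besselI2_nonneg (k : ℤ) : 0 ≤ besselI2 k :=
  tsum_nonneg fun m => by positivity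

lemma besselI2_summable (k : ℤ) :
    Summable fun m : ℕ => 1 / ((Nat.factorial m : ℝ) * (Nat.factorial (m + k.natAbs) : ℝ)) := by
  refine Summable.of_nonneg_of_le (fun m => by positivity) (fun m => ?_)
    (Real.summable_pow_div_factorial 1)
  rw [one_div, div_eq_inv_mul]
  simp only [one_pow, mul_one]
  rw [mul_inv]
  have h1 : ((Nat.factorial (m + k.natAbs) : ℝ))⁻¹ ≤ 1 := by
    rw [inv_le_one_iff₀]
    right; exact_mod_cast Nat.one_le_iff_ne_zero.mpr (Nat.factorial_ne_zero _)
  calc ((m.factorial:ℝ))⁻¹ * ((Nat.factorial (m + k.natAbs) : ℝ))⁻¹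
      ≤ ((m.factorial:ℝ))⁻¹ * 1 := by
        apply mul_le_mul_of_nonneg_left h1 (by positivity)
    _ = ((m.factorial:ℝ))⁻¹ := mul_one _

lemma besselI2_le (k : ℤ) :
    besselI2 k ≤ (∑' m : ℕ, 1 / (Nat.factorial m : ℝ)) / (Nat.factorial k.natAbs : ℝ) := by
  rw [← tsum_div_const]
  refine Summable.tsum_le_tsum (fun m => ?_) (besselI2_summable k) ?_
  · rw [div_div]
    apply one_div_le_one_div_of_le (by positivity)
    have : (Nat.factorial k.natAbs : ℝ) ≤ (Nat.factorial (m + k.natAbs) : ℝ) := by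
      exact_mod_cast Nat.factorial_le (Nat.le_add_left _ _)
    exact mul_le_mul_of_nonneg_left this (by positivity)
  · apply Summable.div_const
    simpa [one_div] using Real.summable_pow_div_factorial 1

lemma besselI2_tendsto (a : ℕ → ℤ) (ha : Tendsto (fun n => (a n).natAbs) atTop atTop) :
    Tendsto (fun n => besselI2 (a n)) atTop (𝓝 0) := by
  set E : ℝ := ∑' m : ℕ, 1 / (Nat.factorial m : ℝ) with hE
  apply squeeze_zero (fun n => besselI2_nonneg _) (fun n => besselI2_le _)
  have hfac : Tendsto (fun j : ℕ => (Nat.factorial j : ℝ)) atTop atTop :=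
    tendsto_natCast_atTop_atTop.comp (tendsto_atTop_mono Nat.self_le_factorial tendsto_id)
  exact Tendsto.div_atTop tendsto_const_nhds (hfac.comp ha)

private theorem part2 : Tendsto (fun n : ℕ =>
      (besselI2 ((n : ℤ) - 1) - besselI2 ((n : ℤ) + 1)) / (besselI2 0 - besselI2 2))
    atTop (𝓝 0) := by
  have h1 : Tendsto (fun n : ℕ => besselI2 ((n : ℤ) - 1)) atTop (𝓝 0) := by
    apply besselI2_tendsto
    rw [tendsto_atTop]
    intro b
    filter_upwards [eventually_ge_atTop (b + 1)] with n hn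
    have : ((n:ℤ) - 1).natAbs = n - 1 := by omega
    omega
  have h2 : Tendsto (fun n : ℕ => besselI2 ((n : ℤ) + 1)) atTop (𝓝 0) := by
    apply besselI2_tendsto
    rw [tendsto_atTop]
    intro b
    filter_upwards [eventually_ge_atTop b] with n hn
    have : ((n:ℤ) + 1).natAbs = n + 1 := by omega
    omega
  have := (h1.sub h2).div_const (besselI2 0 - besselI2 2)
  simpa using this

/-- The cosine of the communicability angle between the two end vertices
of the path graph `P_n` tends to `0` as `n → ∞`:
`lim_{n→∞} cos θ_{1n}(P_n) = lim_{n→∞} (I_{n−1}(2) − I_{n+1}(2))/(I_0(2) − I_2(2)) = 0`.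
Hence the communicability angle attains its upper bound `90°` in the limit. -/
theorem path_graph_end_to_end_angle_limit :
    Tendsto (fun n : ℕ => pathCos n 1 n) atTop (𝓝 0) ∧
    Tendsto (fun n : ℕ =>
        (besselI2 ((n : ℤ) - 1) - besselI2 ((n : ℤ) + 1)) / (besselI2 0 - besselI2 2))
      atTop (𝓝 0) := ⟨part1, part2⟩
end
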